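/- Let P̂* be an n×r real basis matrix, and let P_new and P̂_new be n×c real basis matrices. Then for every s, κ_s(P̂_new) ≤ κ_s(P_new) + ‖(I − P̂* P̂*ᵀ − P̂_new P̂_newᵀ) P_new‖₂ + ‖P̂*ᵀ P_new‖₂. -/

import Mathlib

open Matrix

/-- Spectral norm (largest singular value) of a real matrix. -/
noncomputable def specNorm {m n : Type*} [Fintype m] [Fintype n] [DecidableEq n]
    (A : Matrix m n ℝ) : ℝ :=
  ‖LinearMap.toContinuousLinearMap (Matrix.toEuclideanLin A)‖

/-- Denseness coefficient `κ_s(P) = max_{|T| ≤ s} ‖I_Tᵀ P‖₂`. -/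
noncomputable def kappa {n : ℕ} {r : Type*} [Fintype r] [DecidableEq r]
    (s : ℕ) (P : Matrix (Fin n) r ℝ) : ℝ :=
  ⨆ T : {T : Finset (Fin n) // T.card ≤ s},
    specNorm (P.submatrix (fun i : {i // i ∈ T.1} => i.1) id)

open scoped Matrix.Norms.L2Operator

lemma specNorm_eq_l2 {m n : Type*} [Fintype m] [Fintype n] [DecidableEq n] (A : Matrix m n ℝ) :
    specNorm A = ‖A‖ := rfl

set_option linter.unusedSectionVars false


section aux
variable {m n : Type*} [Fintype m] [Fintype n] [DecidableEq n] [DecidableEq m]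

lemma conjT (A : Matrix m n ℝ) : Aᴴ = Aᵀ := by ext i j; simp [conjTranspose_apply]

lemma norm_t (A : Matrix m n ℝ) : ‖Aᵀ‖ = ‖A‖ := by
  rw [← conjT]; exact l2_opNorm_conjTranspose A

lemma norm_one_le : ‖(1 : Matrix n n ℝ)‖ ≤ 1 := by
  have h : (Matrix.toEuclideanLin (𝕜 := ℝ) (1 : Matrix n n ℝ)).toContinuousLinearMap
      = ContinuousLinearMap.id ℝ (EuclideanSpace ℝ n) := by
    ext x
    simp [Matrix.toEuclideanLin_apply]
  rw [l2_opNorm_def]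
  show ‖(Matrix.toEuclideanLin (𝕜 := ℝ) (1 : Matrix n n ℝ)).toContinuousLinearMap‖ ≤ 1
  rw [h]
  exact ContinuousLinearMap.norm_id_le

lemma norm_le_one {A : Matrix m n ℝ} (h : Aᵀ * A = 1) : ‖A‖ ≤ 1 := by
  have h2 : ‖A‖ * ‖A‖ = ‖(1 : Matrix n n ℝ)‖ := by
    rw [← l2_opNorm_conjTranspose_mul_self, conjT, h]
  nlinarith [norm_nonneg A, norm_one_le (n := n)]

end aux

variable {c n : ℕ}

lemma quad_form (A : Matrix (Fin n) (Fin c) ℝ) (x : EuclideanSpace ℝ (Fin c)) :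
    ‖Matrix.toEuclideanLin A x‖ ^ 2
      = inner (𝕜 := ℝ) x (Matrix.toEuclideanLin (Aᵀ * A) x) := by
  have hadj : Matrix.toEuclideanLin Aᵀ = LinearMap.adjoint (Matrix.toEuclideanLin A) := by
    rw [← conjT]; exact Matrix.toEuclideanLin_conjTranspose_eq_adjoint A
  have : Matrix.toEuclideanLin (Aᵀ * A) x
      = Matrix.toEuclideanLin Aᵀ (Matrix.toEuclideanLin A x) := by
    simp [Matrix.toEuclideanLin_apply, Matrix.mulVec_mulVec]
  rw [this, hadj, LinearMap.adjoint_inner_right, ← real_inner_self_eq_norm_sq]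

/-- quadratic form of `1 - Mᵀ M`. -/
lemma quad_form' (A : Matrix (Fin n) (Fin c) ℝ) (M : Matrix (Fin c) (Fin c) ℝ)
    (h : Aᵀ * A = 1 - Mᵀ * M) (x : EuclideanSpace ℝ (Fin c)) :
    ‖Matrix.toEuclideanLin A x‖ ^ 2 = ‖x‖ ^ 2 - ‖Matrix.toEuclideanLin M x‖ ^ 2 := by
  rw [quad_form, h, quad_form]
  have h1 : Matrix.toEuclideanLin (1 - Mᵀ * M) x
      = x - Matrix.toEuclideanLin (Mᵀ * M) x := by
    rw [map_sub, LinearMap.sub_apply]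
    congr 1
    simp [Matrix.toEuclideanLin_apply]
  rw [h1, inner_sub_right, ← real_inner_self_eq_norm_sq]

set_option maxHeartbeats 1000000 in
lemma sinTheta (P Q : Matrix (Fin n) (Fin c) ℝ) (hP : Pᵀ * P = 1) (hQ : Qᵀ * Q = 1) :
    ‖(1 - P * Pᵀ) * Q‖ ≤ ‖(1 - Q * Qᵀ) * P‖ := by
  have hP' : ∀ (X : Matrix (Fin c) (Fin c) ℝ), Pᵀ * (P * X) = X := fun X => by
    rw [← Matrix.mul_assoc, hP, Matrix.one_mul]
  have hQ' : ∀ (X : Matrix (Fin c) (Fin c) ℝ), Qᵀ * (Q * X) = X := fun X => by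
    rw [← Matrix.mul_assoc, hQ, Matrix.one_mul]
  set M : Matrix (Fin c) (Fin c) ℝ := Pᵀ * Q with hM
  have hR : ((1 - P * Pᵀ) * Q)ᵀ * ((1 - P * Pᵀ) * Q) = 1 - Mᵀ * M := by
    simp [hM, Matrix.transpose_mul, Matrix.transpose_sub, Matrix.sub_mul, Matrix.mul_sub,
      Matrix.mul_assoc, hP', hQ]
  have hG : ((1 - Q * Qᵀ) * P)ᵀ * ((1 - Q * Qᵀ) * P) = 1 - M * Mᵀ := by
    simp [hM, Matrix.transpose_mul, Matrix.transpose_sub, Matrix.sub_mul, Matrix.mul_sub,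
      Matrix.mul_assoc, hQ', hP]
  rcases Nat.eq_zero_or_pos c with hc | hc
  · subst hc
    haveI : Subsingleton (EuclideanSpace ℝ (Fin 0)) :=
      ⟨fun a b => by ext i; exact i.elim0⟩
    have : ‖(1 - P * Pᵀ) * Q‖ ≤ 0 := by
      rw [l2_opNorm_def]
      refine ContinuousLinearMap.opNorm_le_bound _ le_rfl fun x => ?_
      have hx : x = 0 := Subsingleton.elim _ _
      simp [hx]
    exact this.trans (norm_nonneg _)
  -- minimizer of ‖toEuclideanLin Mᵀ x‖ on the unit sphere
  have hcompact : IsCompact (Metric.sphere (0 : EuclideanSpace ℝ (Fin c)) 1) :=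
    isCompact_sphere _ _
  have hne : (Metric.sphere (0 : EuclideanSpace ℝ (Fin c)) 1).Nonempty := by
    refine ⟨EuclideanSpace.single ⟨0, hc⟩ 1, ?_⟩
    simp [EuclideanSpace.norm_single]
  have hcont : ContinuousOn (fun x : EuclideanSpace ℝ (Fin c) =>
      ‖Matrix.toEuclideanLin Mᵀ x‖) (Metric.sphere 0 1) :=
    ((LinearMap.toContinuousLinearMap (Matrix.toEuclideanLin Mᵀ)).continuous.norm).continuousOn
  obtain ⟨y, hy, hmin⟩ := hcompact.exists_isMinOn hne hcont
  have hy1 : ‖y‖ = 1 := by simpa using mem_sphere_zero_iff_norm.mp hy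
  set a : ℝ := ‖Matrix.toEuclideanLin Mᵀ y‖ with ha
  have ha0 : 0 ≤ a := norm_nonneg _
  -- lower bound for Mᵀ on all vectors
  have hlow : ∀ z : EuclideanSpace ℝ (Fin c), a * ‖z‖ ≤ ‖Matrix.toEuclideanLin Mᵀ z‖ := by
    intro z
    rcases eq_or_ne z 0 with rfl | hz
    · simp
    · have hzn : ‖z‖ ≠ 0 := norm_ne_zero_iff.mpr hz
      have hmem : (‖z‖⁻¹ • z) ∈ Metric.sphere (0 : EuclideanSpace ℝ (Fin c)) 1 := by
        simp [norm_smul, abs_of_nonneg (inv_nonneg.mpr (norm_nonneg z)), inv_mul_cancel₀ hzn]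
      have h1 : a ≤ ‖Matrix.toEuclideanLin Mᵀ (‖z‖⁻¹ • z)‖ := hmin hmem
      rw [_root_.map_smul, norm_smul, norm_inv, norm_norm] at h1
      calc a * ‖z‖ ≤ (‖z‖⁻¹ * ‖Matrix.toEuclideanLin Mᵀ z‖) * ‖z‖ :=
            mul_le_mul_of_nonneg_right h1 (norm_nonneg z)
        _ = ‖Matrix.toEuclideanLin Mᵀ z‖ := by field_simp
  -- key claim: a * ‖x‖ ≤ ‖M x‖ for all x
  have hclaim : ∀ x : EuclideanSpace ℝ (Fin c), a * ‖x‖ ≤ ‖Matrix.toEuclideanLin M x‖ := by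
    intro x
    rcases eq_or_lt_of_le ha0 with h0 | hapos
    · rw [← h0, zero_mul]; exact norm_nonneg _
    · -- Mᵀ is injective, hence M invertible
      have hinj : Function.Injective (Mᵀ.mulVec) := by
        intro u v huv
        set w : EuclideanSpace ℝ (Fin c) :=
          (WithLp.equiv 2 _).symm u - (WithLp.equiv 2 _).symm v with hw
        have h2 : Matrix.toEuclideanLin Mᵀ w = 0 := by
          rw [hw, map_sub]
          simp only [Matrix.toEuclideanLin_apply, Equiv.apply_symm_apply]
          simp only [WithLp.equiv_symm_apply, WithLp.ofLp_toLp]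
          rw [huv, sub_self]
        have h3 := hlow w
        rw [h2, norm_zero] at h3
        have h4 : ‖w‖ ≤ 0 := by nlinarith
        have h5 : w = 0 := norm_le_zero_iff.mp h4
        have h6 : (WithLp.equiv 2 ((Fin c) → ℝ)).symm u = (WithLp.equiv 2 _).symm v :=
          sub_eq_zero.mp h5
        exact (WithLp.equiv 2 _).symm.injective h6
      have hMt : IsUnit Mᵀ := Matrix.mulVec_injective_iff_isUnit.mp hinj
      have hMu : IsUnit M := (Matrix.isUnit_transpose M).mp hMt
      have hMinv : M⁻¹ * M = 1 :=
        Matrix.nonsing_inv_mul M (Matrix.isUnit_iff_isUnit_det M |>.mp hMu)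
      have hMtinv : Mᵀ * (M⁻¹)ᵀ = 1 := by
        rw [← Matrix.transpose_mul, hMinv, Matrix.transpose_one]
      -- ‖(M⁻¹)ᵀ z‖ ≤ a⁻¹ ‖z‖
      have hbound : ∀ z : EuclideanSpace ℝ (Fin c),
          ‖Matrix.toEuclideanLin (M⁻¹)ᵀ z‖ ≤ a⁻¹ * ‖z‖ := by
        intro z
        have h7 : Matrix.toEuclideanLin Mᵀ (Matrix.toEuclideanLin (M⁻¹)ᵀ z) = z := by
          simp only [Matrix.toEuclideanLin_apply, Equiv.apply_symm_apply,
            Matrix.mulVec_mulVec, hMtinv, Matrix.one_mulVec]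
        have h8 := hlow (Matrix.toEuclideanLin (M⁻¹)ᵀ z)
        rw [h7] at h8
        rw [← mul_le_mul_iff_right₀ hapos]
        calc a * ‖Matrix.toEuclideanLin (M⁻¹)ᵀ z‖ ≤ ‖z‖ := h8
          _ = a * (a⁻¹ * ‖z‖) := by field_simp
      -- ‖M⁻¹ w‖ ≤ a⁻¹ ‖w‖ via transpose norm
      have hnormMinv : ‖M⁻¹‖ ≤ a⁻¹ := by
        rw [← norm_t, l2_opNorm_def]
        exact ContinuousLinearMap.opNorm_le_bound _ (inv_nonneg.mpr ha0) hbound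
      have h9 : x = Matrix.toEuclideanLin M⁻¹ (Matrix.toEuclideanLin M x) := by
        simp only [Matrix.toEuclideanLin_apply, Equiv.apply_symm_apply,
          Matrix.mulVec_mulVec, hMinv, Matrix.one_mulVec]
      have h10 : ‖x‖ ≤ a⁻¹ * ‖Matrix.toEuclideanLin M x‖ := by
        calc ‖x‖ = ‖Matrix.toEuclideanLin M⁻¹ (Matrix.toEuclideanLin M x)‖ := by rw [← h9]
          _ ≤ ‖M⁻¹‖ * ‖Matrix.toEuclideanLin M x‖ := by
              rw [l2_opNorm_def]
              exact (LinearMap.toContinuousLinearMap (Matrix.toEuclideanLin M⁻¹)).le_opNorm _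
          _ ≤ a⁻¹ * ‖Matrix.toEuclideanLin M x‖ :=
              mul_le_mul_of_nonneg_right hnormMinv (norm_nonneg _)
      calc a * ‖x‖ ≤ a * (a⁻¹ * ‖Matrix.toEuclideanLin M x‖) :=
            mul_le_mul_of_nonneg_left h10 ha0
        _ = ‖Matrix.toEuclideanLin M x‖ := by field_simp
  -- conclude
  have hGlb : 1 - a ^ 2 ≤ ‖(1 - Q * Qᵀ) * P‖ ^ 2 := by
    have h11 := quad_form' ((1 - Q * Qᵀ) * P) Mᵀ (by rw [hG, Matrix.transpose_transpose]) y
    rw [hy1] at h11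
    have h12 : ‖Matrix.toEuclideanLin ((1 - Q * Qᵀ) * P) y‖ ≤ ‖(1 - Q * Qᵀ) * P‖ := by
      have := (LinearMap.toContinuousLinearMap
        (Matrix.toEuclideanLin ((1 - Q * Qᵀ) * P))).le_opNorm y
      rw [hy1, mul_one] at this
      exact this
    nlinarith [norm_nonneg (Matrix.toEuclideanLin ((1 - Q * Qᵀ) * P) y)]
  rw [l2_opNorm_def]
  refine ContinuousLinearMap.opNorm_le_bound _ (norm_nonneg _) fun x => ?_
  show ‖Matrix.toEuclideanLin ((1 - P * Pᵀ) * Q) x‖ ≤ ‖(1 - Q * Qᵀ) * P‖ * ‖x‖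
  have h13 := quad_form' ((1 - P * Pᵀ) * Q) M hR x
  have h14 := hclaim x
  have hGnn : 0 ≤ ‖(1 - Q * Qᵀ) * P‖ := norm_nonneg _
  have h15 : ‖Matrix.toEuclideanLin ((1 - P * Pᵀ) * Q) x‖ ^ 2
      ≤ (‖(1 - Q * Qᵀ) * P‖ * ‖x‖) ^ 2 := by
    nlinarith [mul_le_mul h14 h14 (by positivity) (norm_nonneg _),
      mul_le_mul_of_nonneg_right hGlb (sq_nonneg ‖x‖), norm_nonneg x, sq_nonneg a]
  rw [← Real.sqrt_sq (norm_nonneg (Matrix.toEuclideanLin ((1 - P * Pᵀ) * Q) x)),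
    ← Real.sqrt_sq (mul_nonneg hGnn (norm_nonneg x))]
  exact Real.sqrt_le_sqrt h15

noncomputable def sel {n : ℕ} (T : Finset (Fin n)) : Matrix {i // i ∈ T} (Fin n) ℝ :=
  (1 : Matrix (Fin n) (Fin n) ℝ).submatrix (fun i : {i // i ∈ T} => i.1) id

lemma sub_eq {n : ℕ} {r : Type*} [Fintype r] [DecidableEq r] (P : Matrix (Fin n) r ℝ)
    (T : Finset (Fin n)) :
    P.submatrix (fun i : {i // i ∈ T} => i.1) id = sel T * P := by
  rw [sel, ← Matrix.one_mul P,
    Matrix.submatrix_mul (1 : Matrix (Fin n) (Fin n) ℝ) P _ id _ Function.bijective_id,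
    Matrix.submatrix_id_id, Matrix.one_mul]

lemma sel_mul_t {n : ℕ} (T : Finset (Fin n)) : sel T * (sel T)ᵀ = 1 := by
  rw [sel, Matrix.transpose_submatrix, Matrix.transpose_one,
    ← Matrix.submatrix_mul (1 : Matrix (Fin n) (Fin n) ℝ) 1 _ id _ Function.bijective_id,
    Matrix.one_mul]
  exact Matrix.submatrix_one _ (fun i j h => Subtype.ext h)

lemma sel_norm_le {n : ℕ} (T : Finset (Fin n)) : ‖sel T‖ ≤ 1 := by
  rw [← norm_t (sel T)]
  exact norm_le_one (by rw [Matrix.transpose_transpose, sel_mul_t])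

lemma norm_le_kappa {n s : ℕ} {r : Type*} [Fintype r] [DecidableEq r]
    (P : Matrix (Fin n) r ℝ) (T : Finset (Fin n)) (hT : T.card ≤ s) :
    ‖sel T * P‖ ≤ kappa s P := by
  have hb : BddAbove (Set.range fun T : {T : Finset (Fin n) // T.card ≤ s} =>
      specNorm (P.submatrix (fun i : {i // i ∈ T.1} => i.1) id)) := by
    refine ⟨‖P‖, Set.forall_mem_range.mpr fun T => ?_⟩
    rw [specNorm_eq_l2, sub_eq]
    calc ‖sel T.1 * P‖ ≤ ‖sel T.1‖ * ‖P‖ := Matrix.l2_opNorm_mul _ _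
      _ ≤ 1 * ‖P‖ := mul_le_mul_of_nonneg_right (sel_norm_le _) (norm_nonneg _)
      _ = ‖P‖ := one_mul _
  have := le_ciSup hb (⟨T, hT⟩ : {T : Finset (Fin n) // T.card ≤ s})
  rw [specNorm_eq_l2, sub_eq] at this
  exact this

lemma kappa_le {n s : ℕ} {r : Type*} [Fintype r] [DecidableEq r]
    (P : Matrix (Fin n) r ℝ) (K : ℝ)
    (h : ∀ T : Finset (Fin n), T.card ≤ s → ‖sel T * P‖ ≤ K) : kappa s P ≤ K := by
  haveI : Nonempty {T : Finset (Fin n) // T.card ≤ s} := ⟨⟨∅, by simp⟩⟩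
  refine ciSup_le fun T => ?_
  rw [specNorm_eq_l2, sub_eq]
  exact h T.1 T.2

/-- `κ_s(P̂_new) ≤ κ_s(P_new) + ‖(I − P̂*P̂*ᵀ − P̂_newP̂_newᵀ)P_new‖₂ + ‖P̂*ᵀP_new‖₂`. -/
theorem stmt8 {n r c : ℕ} (s : ℕ)
    (Phats : Matrix (Fin n) (Fin r) ℝ)
    (Pnew Phatnew : Matrix (Fin n) (Fin c) ℝ)
    (hPhats : Phatsᵀ * Phats = 1)
    (hPnew : Pnewᵀ * Pnew = 1) (hPhatnew : Phatnewᵀ * Phatnew = 1) :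
    kappa s Phatnew ≤ kappa s Pnew +
      specNorm ((1 - Phats * Phatsᵀ - Phatnew * Phatnewᵀ) * Pnew) +
      specNorm (Phatsᵀ * Pnew) := by
  have hAle : ‖Phats‖ ≤ 1 := norm_le_one hPhats
  have hPle : ‖Pnew‖ ≤ 1 := norm_le_one hPnew
  have hQle : ‖Phatnew‖ ≤ 1 := norm_le_one hPhatnew
  rw [specNorm_eq_l2, specNorm_eq_l2]
  have hdecomp : (1 - Phatnew * Phatnewᵀ) * Pnew
      = Phats * (Phatsᵀ * Pnew) + (1 - Phats * Phatsᵀ - Phatnew * Phatnewᵀ) * Pnew := by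
    simp only [Matrix.sub_mul, Matrix.mul_sub, Matrix.one_mul, Matrix.mul_one, Matrix.mul_assoc]
    abel
  have hstep3 : ‖(1 - Phatnew * Phatnewᵀ) * Pnew‖ ≤
      ‖(1 - Phats * Phatsᵀ - Phatnew * Phatnewᵀ) * Pnew‖ + ‖Phatsᵀ * Pnew‖ := by
    rw [hdecomp]
    have h1 := norm_add_le (Phats * (Phatsᵀ * Pnew))
      ((1 - Phats * Phatsᵀ - Phatnew * Phatnewᵀ) * Pnew)
    have h2 : ‖Phats * (Phatsᵀ * Pnew)‖ ≤ ‖Phatsᵀ * Pnew‖ := by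
      calc ‖Phats * (Phatsᵀ * Pnew)‖ ≤ ‖Phats‖ * ‖Phatsᵀ * Pnew‖ := Matrix.l2_opNorm_mul _ _
        _ ≤ 1 * ‖Phatsᵀ * Pnew‖ := mul_le_mul_of_nonneg_right hAle (norm_nonneg _)
        _ = ‖Phatsᵀ * Pnew‖ := one_mul _
    linarith
  have hstep2 := sinTheta Pnew Phatnew hPnew hPhatnew
  apply kappa_le
  intro T hT
  have hdec1 : sel T * Phatnew = (sel T * Pnew) * (Pnewᵀ * Phatnew)
      + sel T * ((1 - Pnew * Pnewᵀ) * Phatnew) := by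
    simp only [Matrix.sub_mul, Matrix.mul_sub, Matrix.one_mul, Matrix.mul_one, Matrix.mul_assoc]
    abel
  have e1 : ‖sel T * Phatnew‖ ≤ ‖sel T * Pnew‖ * ‖Pnewᵀ * Phatnew‖
      + ‖sel T‖ * ‖(1 - Pnew * Pnewᵀ) * Phatnew‖ := by
    rw [hdec1]
    exact (norm_add_le _ _).trans
      (add_le_add (Matrix.l2_opNorm_mul _ _) (Matrix.l2_opNorm_mul _ _))
  have e2 : ‖Pnewᵀ * Phatnew‖ ≤ 1 := by
    calc ‖Pnewᵀ * Phatnew‖ ≤ ‖Pnewᵀ‖ * ‖Phatnew‖ := Matrix.l2_opNorm_mul _ _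
      _ ≤ 1 * 1 := mul_le_mul (by rw [norm_t]; exact hPle) hQle (norm_nonneg _) zero_le_one
      _ = 1 := one_mul 1
  have e3 := norm_le_kappa Pnew T hT
  have hknn : 0 ≤ kappa s Pnew := le_trans (norm_nonneg _) e3
  have e5 : ‖sel T * Pnew‖ * ‖Pnewᵀ * Phatnew‖ ≤ kappa s Pnew := by
    calc ‖sel T * Pnew‖ * ‖Pnewᵀ * Phatnew‖ ≤ kappa s Pnew * 1 :=
          mul_le_mul e3 e2 (norm_nonneg _) hknn
      _ = kappa s Pnew := mul_one _
  have e6 : ‖sel T‖ * ‖(1 - Pnew * Pnewᵀ) * Phatnew‖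
      ≤ ‖(1 - Pnew * Pnewᵀ) * Phatnew‖ := by
    calc ‖sel T‖ * ‖(1 - Pnew * Pnewᵀ) * Phatnew‖
        ≤ 1 * ‖(1 - Pnew * Pnewᵀ) * Phatnew‖ :=
          mul_le_mul_of_nonneg_right (sel_norm_le T) (norm_nonneg _)
      _ = ‖(1 - Pnew * Pnewᵀ) * Phatnew‖ := one_mul _
  linarith
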